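/- Let G = (V,E) be a connected graph with n = |V| > 4 nodes, and let S* be a subset achieving the minimum sparsest cut score φ* with min(|S*|, |V∖S*|) ≥ 2. Fix λ ∈ (0,1) and define weights w_ij = 1 if (i,j) ∈ E and w_ij = λ otherwise. Define s* = (s*_ij) by s*_ij = n/(|S*|·|V∖S*|) if exactly one of i,j lies in S*, and s*_ij = 0 otherwise. Then Σ_{i<j} w_ij (s*_ij)² ≤ φ*(1 + λn). -/

import Mathlib

open Finset

/-- The set of ordered pairs `(i,j)` with `i < j`, used to index unordered
pairs of distinct nodes. -/
def pairsFin (n : ℕ) : Finset (Fin n × Fin n) :=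
  Finset.univ.filter (fun p => p.1 < p.2)

/-- `cut(S)`: the number of edges of `G` with exactly one endpoint in `S`. -/
def cutFin {n : ℕ} (G : SimpleGraph (Fin n)) [DecidableRel G.Adj]
    (S : Finset (Fin n)) : ℕ :=
  ((pairsFin n).filter (fun p => G.Adj p.1 p.2 ∧
    ((p.1 ∈ S ∧ p.2 ∉ S) ∨ (p.1 ∉ S ∧ p.2 ∈ S)))).card

lemma cross_card_le {n : ℕ} (S : Finset (Fin n)) :
    ((pairsFin n).filter (fun p => (p.1 ∈ S ∧ p.2 ∉ S) ∨ (p.1 ∉ S ∧ p.2 ∈ S))).card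
      ≤ S.card * Sᶜ.card := by
  rw [← Finset.card_product]
  apply Finset.card_le_card_of_injOn
    (fun p => if p.1 ∈ S then (p.1, p.2) else (p.2, p.1))
  · intro p hp
    rw [Finset.mem_coe, Finset.mem_filter] at hp
    obtain ⟨-, hcr⟩ := hp
    by_cases h1 : p.1 ∈ S
    · have h2 : p.2 ∉ S := by tauto
      simp [h1, h2, Finset.mem_product]
    · have h2 : p.2 ∈ S := by tauto
      simp [h1, h2, Finset.mem_product]
  · intro p hp q hq heq
    rw [Finset.mem_coe, Finset.mem_filter, pairsFin, Finset.mem_filter] at hp hq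
    obtain ⟨⟨-, hplt⟩, -⟩ := hp
    obtain ⟨⟨-, hqlt⟩, -⟩ := hq
    by_cases h1 : p.1 ∈ S <;> by_cases h2 : q.1 ∈ S <;>
      simp only [h1, h2, if_true, if_false, Prod.mk.injEq] at heq
    · exact Prod.ext heq.1 heq.2
    · exact absurd (heq.1 ▸ heq.2 ▸ hqlt) (not_lt.mpr (le_of_lt hplt))
    · exact absurd (heq.1 ▸ heq.2 ▸ hqlt) (not_lt.mpr (le_of_lt hplt))
    · exact Prod.ext heq.2 heq.1

/-- For a connected graph with `n > 4`, an optimal sparsest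
cut set `S*` with both sides of size at least `2`, `λ ∈ (0,1)`, weights `1` on
edges and `λ` elsewhere, and the cut vector `s*`, we have
`∑_{i<j} w_ij (s*_ij)² ≤ φ*(1 + λn)`. -/
theorem stmt6 {n : ℕ} (G : SimpleGraph (Fin n)) [DecidableRel G.Adj]
    (hconn : G.Connected) (hn : 4 < n)
    (φ : Finset (Fin n) → ℝ)
    (hφ : ∀ S : Finset (Fin n),
      φ S = (n : ℝ) * (cutFin G S : ℝ) / ((S.card : ℝ) * (Sᶜ.card : ℝ)))
    (Sstar : Finset (Fin n)) (hS_ne : Sstar.Nonempty)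
    (hS_proper : Sstar ≠ Finset.univ)
    (hS_opt : ∀ S : Finset (Fin n), S.Nonempty → S ≠ Finset.univ →
      φ Sstar ≤ φ S)
    (hS_two : 2 ≤ Sstar.card ∧ 2 ≤ Sstarᶜ.card)
    (lam : ℝ) (hlam : 0 < lam ∧ lam < 1)
    (w : Fin n → Fin n → ℝ)
    (hw : ∀ i j, w i j = if G.Adj i j then 1 else lam)
    (s : Fin n → Fin n → ℝ)
    (hs : ∀ i j, s i j =
      if (i ∈ Sstar ∧ j ∉ Sstar) ∨ (i ∉ Sstar ∧ j ∈ Sstar)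
        then (n : ℝ) / ((Sstar.card : ℝ) * (Sstarᶜ.card : ℝ)) else 0) :
    ∑ p ∈ pairsFin n, w p.1 p.2 * (s p.1 p.2) ^ 2
      ≤ φ Sstar * (1 + lam * n) := by

  obtain ⟨hl0, hl1⟩ := hlam
  set a := Sstar.card with haa
  set b := Sstarᶜ.card with hbb
  have hab : a + b = n := by
    rw [haa, hbb, Finset.card_add_card_compl, Fintype.card_fin]
  have ha2 : 2 ≤ a := hS_two.1
  have hb2 : 2 ≤ b := hS_two.2
  have habn : (n : ℝ) ≤ (a : ℝ) * b := by
    have h : a + b ≤ a * b := by nlinarith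
    have := hab ▸ h
    exact_mod_cast this
  have hapos : (0:ℝ) < a := by exact_mod_cast lt_of_lt_of_le two_pos ha2
  have hbpos : (0:ℝ) < b := by exact_mod_cast lt_of_lt_of_le two_pos hb2
  have habpos : (0:ℝ) < (a:ℝ) * b := mul_pos hapos hbpos
  have hnpos : (0:ℝ) < n := by positivity
  set α : ℝ := (n : ℝ) / ((a:ℝ) * b) with halpha
  have hαpos : 0 < α := div_pos hnpos habpos
  have hαab : α * ((a:ℝ) * b) = n := div_mul_cancel₀ _ (ne_of_gt habpos)
  have hα1 : α ≤ 1 := (div_le_one habpos).mpr habn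
  -- cut ≥ 1
  obtain ⟨u, hu⟩ := hS_ne
  obtain ⟨v, hv'⟩ := Finset.card_pos.mp (lt_of_lt_of_le two_pos hb2)
  have hv : v ∉ Sstar := Finset.mem_compl.mp hv'
  have hcut1 : 1 ≤ cutFin G Sstar := by
    obtain ⟨p⟩ := hconn.preconnected u v
    obtain ⟨d, _, hd1, hd2⟩ := p.exists_boundary_dart (↑Sstar : Set (Fin n))
      (by simpa using hu) (by simpa using hv)
    have hadj : G.Adj d.fst d.snd := d.adj
    have hne : d.fst ≠ d.snd := G.ne_of_adj hadj
    simp only [Finset.mem_coe] at hd1 hd2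
    rw [cutFin]
    apply Finset.card_pos.mpr
    rcases lt_or_gt_of_ne hne with hlt | hgt
    · exact ⟨(d.fst, d.snd), by simp [pairsFin, hlt, hadj, hd1, hd2]⟩
    · exact ⟨(d.snd, d.fst), by simp [pairsFin, hgt, hadj.symm, hd1, hd2]⟩
  set C := (pairsFin n).filter
    (fun p => (p.1 ∈ Sstar ∧ p.2 ∉ Sstar) ∨ (p.1 ∉ Sstar ∧ p.2 ∈ Sstar)) with hC
  have hsum1 : ∑ p ∈ pairsFin n, w p.1 p.2 * (s p.1 p.2) ^ 2
      = ∑ p ∈ C, w p.1 p.2 * α ^ 2 := by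
    rw [hC, Finset.sum_filter]
    refine Finset.sum_congr rfl (fun p _ => ?_)
    by_cases h : (p.1 ∈ Sstar ∧ p.2 ∉ Sstar) ∨ (p.1 ∉ Sstar ∧ p.2 ∈ Sstar)
    · simp only [hs]
      simp [h]
    · simp only [hs]
      simp [h]
  have hsplit : ∑ p ∈ C, w p.1 p.2 * α ^ 2
      = ∑ p ∈ C.filter (fun p => G.Adj p.1 p.2), w p.1 p.2 * α ^ 2
      + ∑ p ∈ C.filter (fun p => ¬ G.Adj p.1 p.2), w p.1 p.2 * α ^ 2 :=
    (Finset.sum_filter_add_sum_filter_not C _ _).symm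
  have hAdjSet : C.filter (fun p => G.Adj p.1 p.2)
      = (pairsFin n).filter (fun p => G.Adj p.1 p.2 ∧
        ((p.1 ∈ Sstar ∧ p.2 ∉ Sstar) ∨ (p.1 ∉ Sstar ∧ p.2 ∈ Sstar))) := by
    rw [hC, Finset.filter_filter]
    exact Finset.filter_congr (fun p _ => by tauto)
  have hsumA : ∑ p ∈ C.filter (fun p => G.Adj p.1 p.2), w p.1 p.2 * α ^ 2
      = (cutFin G Sstar : ℝ) * α ^ 2 := by
    rw [hAdjSet, cutFin]
    rw [Finset.sum_congr rfl (fun p hp => ?_), Finset.sum_const, nsmul_eq_mul]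
    have hp' := (Finset.mem_filter.mp hp).2.1
    rw [hw, if_pos hp', one_mul]
  have hsumB : ∑ p ∈ C.filter (fun p => ¬ G.Adj p.1 p.2), w p.1 p.2 * α ^ 2
      = ((C.filter (fun p => ¬ G.Adj p.1 p.2)).card : ℝ) * (lam * α ^ 2) := by
    rw [Finset.sum_congr rfl (fun p hp => ?_), Finset.sum_const, nsmul_eq_mul]
    have hp' := (Finset.mem_filter.mp hp).2
    rw [hw, if_neg hp']
  -- card bound
  have hCcard : (C.card : ℝ) ≤ (a:ℝ) * b := by
    have h1 := cross_card_le Sstar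
    rw [← hC] at h1
    exact_mod_cast h1
  have hBcard : ((C.filter (fun p => ¬ G.Adj p.1 p.2)).card : ℝ) ≤ (a:ℝ) * b :=
    le_trans (by exact_mod_cast Finset.card_le_card (Finset.filter_subset _ _)) hCcard
  have hφS : φ Sstar = (cutFin G Sstar : ℝ) * α := by
    rw [hφ, halpha]; ring
  rw [hsum1, hsplit, hsumA, hsumB, hφS]
  set cut : ℝ := (cutFin G Sstar : ℝ) with hcutdef
  have hcut1' : (1:ℝ) ≤ cut := by
    rw [hcutdef]; exact_mod_cast hcut1
  set m : ℝ := ((C.filter (fun p => ¬ G.Adj p.1 p.2)).card : ℝ) with hm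
  clear_value cut m
  clear hcutdef hm hsum1 hsplit hsumA hsumB hφS hCcard hs hw hφ hS_opt
  clear_value α
  clear halpha
  have h1 : cut * α ^ 2 ≤ cut * α := by
    have key : 0 ≤ cut * α * (1 - α) :=
      mul_nonneg (mul_nonneg (zero_le_one.trans hcut1') hαpos.le)
        (sub_nonneg.mpr hα1)
    nlinarith [key]
  have h2 : m * (lam * α ^ 2) ≤ cut * α * (lam * n) := by
    have e1 : m * (lam * α ^ 2) ≤ ((a:ℝ)*b) * (lam * α ^ 2) :=
      mul_le_mul_of_nonneg_right hBcard (mul_nonneg hl0.le (sq_nonneg α))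
    have e2 : ((a:ℝ)*b) * (lam * α ^ 2) = lam * ((n:ℝ) * α) := by
      rw [← hαab]; ring
    have e3 : lam * ((n:ℝ) * α) ≤ cut * α * (lam * n) := by
      have h := mul_le_mul_of_nonneg_right hcut1'
        (mul_nonneg (mul_nonneg hl0.le hnpos.le) hαpos.le)
      nlinarith [h]
    linarith [e1, e2.le, e2.ge, e3]
  calc cut * α ^ 2 + m * (lam * α ^ 2) ≤ cut * α + cut * α * (lam * n) := by
        linarith
    _ = cut * α * (1 + lam * n) := by ring
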